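/- The lower-triangular matrix F̄ with entries f̄_{nk} = (1/λ_n)[(λ_k − λ_{k-1}) f_k/f_{k+1} − (λ_{k+1} − λ_k) f_{k+2}/f_{k+1}] for k < n, f̄_{nn} = (1/λ_n)(λ_n − λ_{n-1}) f_n/f_{n+1}, and f̄_{nk} = 0 for k > n, has the two-sided inverse given by f̄⁻¹_{nk} = λ_k f_{n+1}² [1/((λ_k − λ_{k-1}) f_k f_{k+1}) − 1/((λ_{k+1} − λ_k) f_{k+1} f_{k+2})] for 0 ≤ k < n, f̄⁻¹_{nn} = λ_n f_{n+1}² /((λ_n − λ_{n-1}) f_n f_{n+1}), and f̄⁻¹_{nk} = 0 for k > n; i.e. ∑_j f̄_{nj} f̄⁻¹_{jk} = δ_{nk} for all n, k. -/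

import Mathlib

open Filter Finset

noncomputable def fibR : ℕ → ℝ
  | 0 => 1
  | 1 => 1
  | (n + 2) => fibR (n + 1) + fibR n

noncomputable def Fhat (x : ℕ → ℝ) (n : ℕ) : ℝ :=
  fibR n / fibR (n + 1) * x n - fibR (n + 1) / fibR n * (if n = 0 then 0 else x (n - 1))

noncomputable def Fbar (Λ : ℕ → ℝ) (x : ℕ → ℝ) (n : ℕ) : ℝ :=
  (1 / Λ n) * ∑ k ∈ Finset.range (n + 1),
    (Λ k - if k = 0 then 0 else Λ (k - 1)) *
      (fibR k / fibR (k + 1) * x k -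
        fibR (k + 1) / fibR k * (if k = 0 then 0 else x (k - 1)))

noncomputable def Fmat (Λ : ℕ → ℝ) (n k : ℕ) : ℝ :=
  if k < n then
    (1 / Λ n) * ((Λ k - if k = 0 then 0 else Λ (k - 1)) * fibR k / fibR (k + 1)
      - (Λ (k + 1) - Λ k) * fibR (k + 2) / fibR (k + 1))
  else if k = n then
    (1 / Λ n) * ((Λ n - if n = 0 then 0 else Λ (n - 1)) * fibR n / fibR (n + 1))
  else 0

noncomputable def FmatInv (Λ : ℕ → ℝ) (n k : ℕ) : ℝ :=
  if k < n then
    Λ k * fibR (n + 1) ^ 2 *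
      (1 / ((Λ k - if k = 0 then 0 else Λ (k - 1)) * (fibR k * fibR (k + 1)))
        - 1 / ((Λ (k + 1) - Λ k) * (fibR (k + 1) * fibR (k + 2))))
  else if k = n then
    Λ n * fibR (n + 1) ^ 2 /
      ((Λ n - if n = 0 then 0 else Λ (n - 1)) * (fibR n * fibR (n + 1)))
  else 0

/-! ### Auxiliary lemmas -/

lemma fibR_pos : ∀ n, 0 < fibR n
  | 0 => by norm_num [fibR]
  | 1 => by norm_num [fibR]
  | (n + 2) => by
      rw [fibR]
      exact add_pos (fibR_pos (n + 1)) (fibR_pos n)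

lemma fibR_ne (n : ℕ) : fibR n ≠ 0 := (fibR_pos n).ne'

noncomputable def DD (Λ : ℕ → ℝ) (k : ℕ) : ℝ := Λ k - if k = 0 then 0 else Λ (k - 1)

lemma DD_pos (Λ : ℕ → ℝ) (hmono : StrictMono Λ) (hpos : ∀ k, 0 < Λ k) (k : ℕ) :
    0 < DD Λ k := by
  cases k with
  | zero => simpa [DD] using hpos 0
  | succ m => simpa [DD] using sub_pos.mpr (hmono (Nat.lt_succ_self m))

lemma DD_succ (Λ : ℕ → ℝ) (k : ℕ) : DD Λ (k + 1) = Λ (k + 1) - Λ k := by simp [DD]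

lemma Fmat_lt (Λ : ℕ → ℝ) {n k : ℕ} (h : k < n) :
    Fmat Λ n k = (1 / Λ n) *
      (DD Λ k * fibR k / fibR (k + 1) - DD Λ (k + 1) * fibR (k + 2) / fibR (k + 1)) := by
  rw [Fmat, if_pos h, DD_succ]
  rfl

lemma Fmat_diag (Λ : ℕ → ℝ) (n : ℕ) :
    Fmat Λ n n = (1 / Λ n) * (DD Λ n * fibR n / fibR (n + 1)) := by
  rw [Fmat, if_neg (lt_irrefl n), if_pos rfl]
  rfl

lemma FmatInv_lt (Λ : ℕ → ℝ) {n k : ℕ} (h : k < n) :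
    FmatInv Λ n k = Λ k * fibR (n + 1) ^ 2 *
      (1 / (DD Λ k * (fibR k * fibR (k + 1)))
        - 1 / (DD Λ (k + 1) * (fibR (k + 1) * fibR (k + 2)))) := by
  rw [FmatInv, if_pos h, DD_succ]
  rfl

lemma FmatInv_diag (Λ : ℕ → ℝ) (n : ℕ) :
    FmatInv Λ n n = Λ n * fibR (n + 1) ^ 2 / (DD Λ n * (fibR n * fibR (n + 1))) := by
  rw [FmatInv, if_neg (lt_irrefl n), if_pos rfl]
  rfl

lemma FmatInv_gt (Λ : ℕ → ℝ) {n k : ℕ} (h : n < k) : FmatInv Λ n k = 0 := by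
  rw [FmatInv, if_neg (by omega), if_neg (by omega)]

/-- Telescoping sum. -/
lemma tele (Λ : ℕ → ℝ) (hmono : StrictMono Λ) (hpos : ∀ k, 0 < Λ k) (n : ℕ) :
    ∀ d m, m + d = n →
      ∑ j ∈ Finset.Ico m (n + 1), Fmat Λ n j * fibR (j + 1) ^ 2
        = (1 / Λ n) * (DD Λ m * (fibR m * fibR (m + 1))) := by
  intro d
  induction d with
  | zero =>
    intro m hm
    have hm' : m = n := by omega
    subst hm'
    have hset : Finset.Ico m (m + 1) = {m} := by
      ext x; simp
    rw [hset, Finset.sum_singleton, Fmat_diag]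
    have h2 := fibR_ne (m + 1)
    have h3 := (hpos m).ne'
    have h4 := (DD_pos Λ hmono hpos m).ne'
    field_simp [h2, h3, h4]
  | succ d ih =>
    intro m hm
    have hmn : m < n := by omega
    rw [Finset.sum_eq_sum_Ico_succ_bot (by omega), ih (m + 1) (by omega), Fmat_lt Λ hmn]
    have h1 := fibR_ne (m + 1)
    have h3 := (hpos n).ne'
    field_simp [h1, h3]
    ring

theorem Fmat_mul_FmatInv (Λ : ℕ → ℝ) (hmono : StrictMono Λ) (hpos : ∀ k, 0 < Λ k)
    (hlim : Tendsto Λ atTop atTop) (n k : ℕ) :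
    ∑ j ∈ Finset.range (n + 1), Fmat Λ n j * FmatInv Λ j k =
      if n = k then 1 else 0 := by
  have hΛ : ∀ m, Λ m ≠ 0 := fun m => (hpos m).ne'
  have hD : ∀ m, DD Λ m ≠ 0 := fun m => (DD_pos Λ hmono hpos m).ne'
  rcases lt_trichotomy n k with h | h | h
  · rw [if_neg (by omega)]
    apply Finset.sum_eq_zero
    intro j hj
    rw [Finset.mem_range] at hj
    rw [FmatInv_gt Λ (by omega), mul_zero]
  · subst h
    rw [if_pos rfl]
    rw [Finset.sum_eq_single_of_mem n (Finset.self_mem_range_succ n)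
      (fun j hj hne => by
        rw [Finset.mem_range] at hj
        rw [FmatInv_gt Λ (by omega), mul_zero])]
    rw [Fmat_diag, FmatInv_diag]
    have h1 := fibR_ne n
    have h2 := fibR_ne (n + 1)
    have h3 := hΛ n
    have h4 := hD n
    field_simp [h1, h2, h3, h4]
  · rw [if_neg (by omega)]
    have hsplit : Finset.range (n + 1) =
        Finset.Ico 0 (k + 1) ∪ Finset.Ico (k + 1) (n + 1) := by
      rw [Finset.range_eq_Ico, Finset.Ico_union_Ico_eq_Ico (by omega) (by omega)]
    rw [hsplit, Finset.sum_union (by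
      apply Finset.Ico_disjoint_Ico_consecutive)]
    have h1 : ∑ j ∈ Finset.Ico 0 (k + 1), Fmat Λ n j * FmatInv Λ j k
        = Fmat Λ n k * FmatInv Λ k k := by
      rw [← Finset.range_eq_Ico]
      exact Finset.sum_eq_single_of_mem k (Finset.self_mem_range_succ k)
        (fun j hj hne => by
          rw [Finset.mem_range] at hj
          rw [FmatInv_gt Λ (by omega), mul_zero])
    have h2 : ∑ j ∈ Finset.Ico (k + 1) (n + 1), Fmat Λ n j * FmatInv Λ j k
        = (Λ k * (1 / (DD Λ k * (fibR k * fibR (k + 1)))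
            - 1 / (DD Λ (k + 1) * (fibR (k + 1) * fibR (k + 2))))) *
          ∑ j ∈ Finset.Ico (k + 1) (n + 1), Fmat Λ n j * fibR (j + 1) ^ 2 := by
      rw [Finset.mul_sum]
      apply Finset.sum_congr rfl
      intro j hj
      rw [Finset.mem_Ico] at hj
      rw [FmatInv_lt Λ (by omega)]
      ring
    rw [h1, h2, tele Λ hmono hpos n (n - (k + 1)) (k + 1) (by omega)]
    rw [Fmat_lt Λ h, FmatInv_diag]
    have hf1 := fibR_ne k
    have hf2 := fibR_ne (k + 1)
    have hf3 := fibR_ne (k + 2)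
    have h3 := hΛ n
    have h4 := hΛ k
    have h5 := hD k
    have h6 := hD (k + 1)
    field_simp [hf1, hf2, hf3, h3, h4, h5, h6]
    ring
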